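/- Let H be a complex inner product space (Hilbert space), let u, v ∈ H be unit vectors, and let O be a continuous linear operator on H such that both O and Id − O are positive (i.e. 0 ≤ O ≤ I). Set y = Re⟨u, O u⟩ and z = |⟨v, u⟩|². Then Re⟨v, O v⟩ ≤ G₊(y, z). (Upper Cauchy–Schwarz constraint, Theorem 1 of the paper.) -/

import Mathlib

noncomputable def gPlus (y z : ℝ) : ℝ :=
  y + (1 - z) * (1 - 2 * y) + 2 * Real.sqrt (z * (1 - z) * y * (1 - y))

noncomputable def GPlus (y z : ℝ) : ℝ :=
  if y < z then gPlus y z else 1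

private lemma real_key {y z t q : ℝ} (hy0 : 0 ≤ y) (hy1 : y ≤ 1) (hz1 : z ≤ 1)
    (ht0 : 0 ≤ t) (ht1 : t ≤ 1 - z) (hq : 0 ≤ q)
    (h1 : q ^ 2 ≤ y * t) (h2 : q ^ 2 ≤ (1 - y) * (1 - z - t)) (hyz : y < z) :
    z * y + 2 * Real.sqrt z * q + t ≤ gPlus y z := by
  have hz0 : 0 ≤ z := le_trans hy0 hyz.le
  have hgp : gPlus y z
      = z * y + (1 - y) * (1 - z) + 2 * (Real.sqrt (z * y) * Real.sqrt ((1 - y) * (1 - z))) := by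
    rw [gPlus, show z * (1 - z) * y * (1 - y) = (z * y) * ((1 - y) * (1 - z)) from by ring,
      Real.sqrt_mul (mul_nonneg hz0 hy0)]
    ring
  rw [hgp]
  rcases le_or_gt t ((1 - y) * (1 - z)) with hcase | hcase
  · have hq1 : q ≤ Real.sqrt (y * t) := by
      rw [← Real.sqrt_sq hq]; exact Real.sqrt_le_sqrt h1
    have e1 : Real.sqrt z * Real.sqrt (y * t) = Real.sqrt (z * y) * Real.sqrt t := by
      rw [← Real.sqrt_mul hz0, show z * (y * t) = (z * y) * t from by ring,
        Real.sqrt_mul (mul_nonneg hz0 hy0)]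
    have h3 : Real.sqrt t ≤ Real.sqrt ((1 - y) * (1 - z)) := Real.sqrt_le_sqrt hcase
    have h4 : Real.sqrt z * q ≤ Real.sqrt (z * y) * Real.sqrt t := by
      calc Real.sqrt z * q ≤ Real.sqrt z * Real.sqrt (y * t) :=
            mul_le_mul_of_nonneg_left hq1 (Real.sqrt_nonneg z)
        _ = _ := e1
    nlinarith [Real.sqrt_nonneg (z * y),
      mul_le_mul_of_nonneg_left h3 (Real.sqrt_nonneg (z * y))]
  · set s : ℝ := 1 - z - t with hs
    have hs0 : 0 ≤ s := by simp [hs]; linarith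
    have hsb : s ≤ y * (1 - z) := by simp only [hs]; nlinarith
    set a : ℝ := Real.sqrt s with ha
    set b : ℝ := Real.sqrt (y * (1 - z)) with hb
    set cc : ℝ := Real.sqrt (z * (1 - y)) with hcc
    have hab : a ≤ b := Real.sqrt_le_sqrt hsb
    have hbc : b ≤ cc := Real.sqrt_le_sqrt (by nlinarith)
    have ha0 : 0 ≤ a := Real.sqrt_nonneg _
    have ha2 : a ^ 2 = s := Real.sq_sqrt hs0
    have hb2 : b ^ 2 = y * (1 - z) := Real.sq_sqrt (by nlinarith)
    have hq2 : q ≤ Real.sqrt ((1 - y) * s) := by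
      rw [← Real.sqrt_sq hq]; exact Real.sqrt_le_sqrt h2
    have e2 : Real.sqrt z * Real.sqrt ((1 - y) * s) = cc * a := by
      rw [← Real.sqrt_mul hz0, show z * ((1 - y) * s) = (z * (1 - y)) * s from by ring,
        Real.sqrt_mul (by nlinarith)]
    have h4 : Real.sqrt z * q ≤ cc * a := by
      calc Real.sqrt z * q ≤ Real.sqrt z * Real.sqrt ((1 - y) * s) :=
            mul_le_mul_of_nonneg_left hq2 (Real.sqrt_nonneg z)
        _ = _ := e2
    have e3 : Real.sqrt (z * y) * Real.sqrt ((1 - y) * (1 - z)) = cc * b := by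
      rw [← Real.sqrt_mul (mul_nonneg hz0 hy0), hcc, hb,
        ← Real.sqrt_mul (by nlinarith)]
      ring_nf
    rw [e3]
    have key : 2 * (cc * a) + (1 - z - a ^ 2) ≤ (1 - z - b ^ 2) + 2 * (cc * b) := by
      nlinarith [mul_nonneg (sub_nonneg.2 hab) (by linarith : (0:ℝ) ≤ 2 * cc - a - b)]
    have htt : t = 1 - z - a ^ 2 := by rw [ha2]; simp [hs]
    have hA : (1 - y) * (1 - z) = 1 - z - b ^ 2 := by rw [hb2]; ring
    linarith

private lemma opCS {H : Type*} [NormedAddCommGroup H] [InnerProductSpace ℂ H] [CompleteSpace H]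
    (O : H →L[ℂ] H) (hO : O.IsPositive) (x y : H) :
    ‖(inner ℂ x (O y) : ℂ)‖ ^ 2 ≤ (inner ℂ x (O x) : ℂ).re * (inner ℂ y (O y) : ℂ).re := by
  have hsym : (O : H →ₗ[ℂ] H).IsSymmetric := hO.isSelfAdjoint.isSymmetric
  letI cO : PreInnerProductSpace.Core ℂ H :=
  { inner := fun a b => inner ℂ a (O b)
    conj_inner_symm := fun a b => by
      calc (starRingEnd ℂ) (inner ℂ b (O a)) = inner ℂ (O a) b := inner_conj_symm _ _
        _ = inner ℂ a (O b) := hsym a b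
    re_inner_nonneg := fun a => (Complex.nonneg_iff.mp (hO.inner_nonneg_right a)).1
    add_left := fun a b c => inner_add_left _ _ _
    smul_left := fun a b r => inner_smul_left _ _ _ }
  have h : ‖(inner ℂ x (O y) : ℂ)‖ * ‖(inner ℂ y (O x) : ℂ)‖
      ≤ (inner ℂ x (O x) : ℂ).re * (inner ℂ y (O y) : ℂ).re :=
    @InnerProductSpace.Core.inner_mul_inner_self_le ℂ H _ _ _ cO x y
  have hxy : ‖(inner ℂ y (O x) : ℂ)‖ = ‖(inner ℂ x (O y) : ℂ)‖ := by
    rw [norm_inner_symm]; exact congrArg norm (hsym x y)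
  rw [hxy] at h
  calc ‖(inner ℂ x (O y) : ℂ)‖ ^ 2 = ‖(inner ℂ x (O y) : ℂ)‖ * ‖(inner ℂ x (O y) : ℂ)‖ := sq _
    _ ≤ _ := h

theorem upper_cauchy_schwarz_constraint
    {H : Type*} [NormedAddCommGroup H] [InnerProductSpace ℂ H] [CompleteSpace H]
    (u v : H) (hu : ‖u‖ = 1) (hv : ‖v‖ = 1)
    (O : H →L[ℂ] H) (hO : O.IsPositive)
    (hO' : (ContinuousLinearMap.id ℂ H - O).IsPositive) :
    (inner ℂ v (O v) : ℂ).re ≤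
      GPlus ((inner ℂ u (O u) : ℂ).re) (‖(inner ℂ v u : ℂ)‖ ^ 2) := by
  have hsym : (O : H →ₗ[ℂ] H).IsSymmetric := hO.isSelfAdjoint.isSymmetric
  set y : ℝ := (inner ℂ u (O u) : ℂ).re with hydef
  set z : ℝ := ‖(inner ℂ v u : ℂ)‖ ^ 2 with hzdef
  have huu : (inner ℂ u u : ℂ) = 1 := by
    rw [inner_self_eq_norm_sq_to_K, hu]; norm_num
  have hvv : (inner ℂ v v : ℂ) = 1 := by
    rw [inner_self_eq_norm_sq_to_K, hv]; norm_num
  have hIO : ∀ x x' : H, (inner ℂ x ((ContinuousLinearMap.id ℂ H - O) x') : ℂ)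
      = inner ℂ x x' - inner ℂ x (O x') := fun x x' => by
    simp [ContinuousLinearMap.sub_apply, inner_sub_right]
  have hObd : ∀ x : H, (inner ℂ x (O x) : ℂ).re ≤ (inner ℂ x x : ℂ).re := fun x => by
    have h : (0:ℝ) ≤ (inner ℂ x ((ContinuousLinearMap.id ℂ H - O) x) : ℂ).re :=
      (Complex.nonneg_iff.mp (hO'.inner_nonneg_right x)).1
    rw [hIO x x] at h
    simp only [Complex.sub_re] at h
    linarith
  have hOne : (inner ℂ v (O v) : ℂ).re ≤ 1 := by
    have h := hObd v; rw [hvv] at h; simpa using h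
  by_cases hyz : y < z
  · rw [GPlus, if_pos hyz]
    set c : ℂ := (inner ℂ u v : ℂ) with hcdef
    set w : H := v - c • u with hwdef
    have hcu : (inner ℂ u w : ℂ) = 0 := by
      simp [hwdef, inner_sub_right, inner_smul_right, huu, hcdef, hu]
    have hzc : z = ‖c‖ ^ 2 := by
      rw [hzdef, hcdef]
      rw [norm_inner_symm v u]
    have hsqz : Real.sqrt z = ‖c‖ := by rw [hzc, Real.sqrt_sq (norm_nonneg c)]
    have hv' : v = c • u + w := by rw [hwdef]; abel
    have hz_re : z = c.re * c.re + c.im * c.im := by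
      simp [hzc, Complex.sq_norm, Complex.normSq_apply]
    have hww0 : (inner ℂ w w : ℂ) = 1 - c * (starRingEnd ℂ) c := by
      rw [hwdef, inner_sub_sub_self]
      rw [inner_smul_left, inner_smul_right, inner_smul_left, inner_smul_right]
      rw [huu, hvv]
      have h1 : (inner ℂ v u : ℂ) = (starRingEnd ℂ) c := by
        rw [hcdef, inner_conj_symm]
      have h2 : (inner ℂ u v : ℂ) = c := hcdef.symm
      rw [h1, h2]
      ring
    have hww : (inner ℂ w w : ℂ).re = 1 - z := by
      rw [hww0]
      simp [Complex.sub_re, Complex.mul_re, Complex.conj_re, Complex.conj_im, hz_re]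
    set t : ℝ := (inner ℂ w (O w) : ℂ).re with htdef
    set q : ℝ := ‖(inner ℂ u (O w) : ℂ)‖ with hqdef
    have e1 : (inner ℂ v (O v) : ℂ)
        = (starRingEnd ℂ) c * c * inner ℂ u (O u) + (starRingEnd ℂ) c * inner ℂ u (O w)
          + c * inner ℂ w (O u) + inner ℂ w (O w) := by
      conv_lhs => rw [hv']
      simp only [map_add, map_smul, inner_add_left, inner_add_right,
        inner_smul_left, inner_smul_right]
      ring
    have e2 : (inner ℂ w (O u) : ℂ) = (starRingEnd ℂ) (inner ℂ u (O w)) := by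
      calc (inner ℂ w (O u) : ℂ) = inner ℂ ((O : H →ₗ[ℂ] H) w) u := (hsym w u).symm
        _ = (starRingEnd ℂ) (inner ℂ u (O w)) := (inner_conj_symm _ _).symm
    have hre : (inner ℂ v (O v) : ℂ).re
        = z * y + 2 * ((starRingEnd ℂ) c * inner ℂ u (O w)).re + t := by
      rw [e1, e2, htdef, hydef, hz_re]
      simp only [Complex.add_re, Complex.mul_re, Complex.mul_im, Complex.conj_re,
        Complex.conj_im]
      ring
    have hcross : ((starRingEnd ℂ) c * inner ℂ u (O w)).re ≤ Real.sqrt z * q := by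
      calc ((starRingEnd ℂ) c * inner ℂ u (O w)).re
          ≤ ‖(starRingEnd ℂ) c * inner ℂ u (O w)‖ := Complex.re_le_norm _
        _ = ‖c‖ * q := by rw [norm_mul, RCLike.norm_conj]
        _ = Real.sqrt z * q := by rw [hsqz]
    have hy0 : (0:ℝ) ≤ y := (Complex.nonneg_iff.mp (hO.inner_nonneg_right u)).1
    have hy1 : y ≤ 1 := by have h := hObd u; rw [huu] at h; simpa using h
    have hz1 : z ≤ 1 := by
      have h := norm_inner_le_norm (𝕜 := ℂ) v u
      rw [hu, hv] at h
      rw [hzdef]; nlinarith [norm_nonneg (inner ℂ v u : ℂ)]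
    have ht0 : (0:ℝ) ≤ t := (Complex.nonneg_iff.mp (hO.inner_nonneg_right w)).1
    have ht1 : t ≤ 1 - z := by have h := hObd w; rw [hww] at h; linarith
    have hq0 : (0:ℝ) ≤ q := norm_nonneg _
    have h1 : q ^ 2 ≤ y * t := opCS O hO u w
    have h2 : q ^ 2 ≤ (1 - y) * (1 - z - t) := by
      have h := opCS _ hO' u w
      rw [hIO u w, hIO u u, hIO w w, hcu, huu] at h
      simp only [zero_sub, norm_neg, Complex.sub_re, Complex.one_re] at h
      rw [hww] at h
      calc q ^ 2 = ‖(inner ℂ u (O w) : ℂ)‖ ^ 2 := by rw [hqdef]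
        _ ≤ (1 - y) * (1 - z - t) := by convert h using 2
    calc (inner ℂ v (O v) : ℂ).re
        = z * y + 2 * ((starRingEnd ℂ) c * inner ℂ u (O w)).re + t := hre
      _ ≤ z * y + 2 * (Real.sqrt z * q) + t := by linarith
      _ = z * y + 2 * Real.sqrt z * q + t := by ring
      _ ≤ gPlus y z := real_key hy0 hy1 hz1 ht0 ht1 hq0 h1 h2 hyz
  · rw [GPlus, if_neg hyz]; exact hOne
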